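/- In the formal power series ring ℤ[x,y][[q]], the series ∑_{(μ,ν)} m(μ)·m(ν)·x^{ℓ_d(μ)+ℓ_d(ν)}·y^{2ℓ_r(μ,ν)}·q^{|μ|+|ν|}, summed over all ordered pairs (μ,ν) of partitions into odd parts (including the empty partition), equals the infinite product ∏_{m≥1} ( 1 + 2x·q^{2m−1}/(1−q^{2m−1})² + x²y²·q^{2(2m−1)}/(1−q^{2m−1})⁴ ). -/

import Mathlib

/-- The coefficient ring `ℤ[x,y]`. -/
noncomputable abbrev Rxy : Type := MvPolynomial (Fin 2) ℤ

/-- The variable `x` of `ℤ[x,y]`. -/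
noncomputable def xv : Rxy := MvPolynomial.X 0

/-- The variable `y` of `ℤ[x,y]`. -/
noncomputable def yv : Rxy := MvPolynomial.X 1

/-- `m(λ)`: the product of the multiplicities of the distinct part sizes of a partition,
i.e. the number of PDO designations of `λ`. -/
def pdoWeight {n : ℕ} (l : n.Partition) : ℕ :=
  ∏ a ∈ l.parts.toFinset, l.parts.count a

/-- `ℓ_d(λ)`: the number of distinct part sizes of a partition. -/
def numDistinct {n : ℕ} (l : n.Partition) : ℕ :=
  l.parts.toFinset.card

/-- `ℓ_r(μ,ν)`: the number of part sizes occurring in both `μ` and `ν`. -/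
def numCommon {a b : ℕ} (mu : a.Partition) (nu : b.Partition) : ℕ :=
  (mu.parts.toFinset ∩ nu.parts.toFinset).card

/-- The series `∑_{(μ,ν)} m(μ) m(ν) x^{ℓ_d(μ)+ℓ_d(ν)} y^{2ℓ_r(μ,ν)} q^{|μ|+|ν|}` over ordered
pairs of partitions into odd parts, i.e. `P₂(x,y,q)`: the coefficient of `q^n` collects all
pairs with `|μ| + |ν| = n`. -/
noncomputable def P2 : PowerSeries Rxy :=
  PowerSeries.mk fun n =>
    ∑ k ∈ Finset.range (n + 1),
      ∑ mu ∈ Nat.Partition.odds k,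
        ∑ nu ∈ Nat.Partition.odds (n - k),
          (pdoWeight mu * pdoWeight nu : Rxy) *
            xv ^ (numDistinct mu + numDistinct nu) * yv ^ (2 * numCommon mu nu)

/-- The `m`-th factor (`m ≥ 1`) of the product:
`1 + 2x q^{2m-1}/(1-q^{2m-1})² + x²y² q^{2(2m-1)}/(1-q^{2m-1})⁴`.
`Ring.inverse` yields the genuine inverse since `1 - q^{2m-1}` is a unit. -/
noncomputable def factor2 (m : ℕ) : PowerSeries Rxy :=
  1 +
    2 * PowerSeries.C (R := Rxy) xv * PowerSeries.X ^ (2 * m - 1) *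
      Ring.inverse ((1 - PowerSeries.X ^ (2 * m - 1)) ^ 2) +
    PowerSeries.C (R := Rxy) (xv ^ 2 * yv ^ 2) * PowerSeries.X ^ (2 * (2 * m - 1)) *
      Ring.inverse ((1 - PowerSeries.X ^ (2 * m - 1)) ^ 4)

/-- The infinite product `∏_{m ≥ 1} factor2 m`, defined coefficientwise: since
`factor2 m = 1 + O(q^{2m-1})`, the coefficient of `q^n` is that of any sufficiently long
partial product, e.g. `∏_{m=1}^{n+1}`. -/
noncomputable def prod2 : PowerSeries Rxy :=
  PowerSeries.mk fun n =>
    PowerSeries.coeff (R := Rxy) n (∏ m ∈ Finset.range (n + 1), factor2 (m + 1))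

open Finset PowerSeries

namespace P2Aux

/-- local weight of a multiplicity pair -/
noncomputable def Wp (j k : ℕ) : Rxy :=
  (if j = 0 then 1 else (j : Rxy) * xv) * (if k = 0 then 1 else (k : Rxy) * xv) *
    (if j = 0 ∨ k = 0 then 1 else yv ^ 2)

/-- the local factor as an explicit power series -/
noncomputable def F (a : ℕ) : PowerSeries Rxy :=
  PowerSeries.mk fun d => if a ∣ d then ∑ p ∈ antidiagonal (d / a), Wp p.1 p.2 else 0

/-- `∑_{j≥1} j t^j` with `t = X^a`. -/
noncomputable def G (a : ℕ) : PowerSeries Rxy :=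
  PowerSeries.mk fun d => if a ∣ d then ((d / a : ℕ) : Rxy) else 0

lemma isUnit_one_sub_pow {a : ℕ} (ha : 0 < a) (k : ℕ) :
    IsUnit ((1 - X ^ a : PowerSeries Rxy) ^ k) := by
  rw [PowerSeries.isUnit_iff_constantCoeff]
  simp [map_pow, map_sub, coeff_zero_eq_constantCoeff.symm, PowerSeries.coeff_X_pow,
    ha.ne']

lemma one_sub_sq_mul_G {a : ℕ} (ha : 0 < a) :
    (1 - X ^ a : PowerSeries Rxy) ^ 2 * G a = X ^ a := by
  have h : (1 - X ^ a : PowerSeries Rxy) ^ 2 * G a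
      = G a - X ^ a * G a - X ^ a * G a + X ^ (a + a) * G a := by
    rw [pow_add]; ring
  rw [h]
  refine PowerSeries.ext fun d => ?_
  rw [map_add, map_sub, map_sub, coeff_X_pow_mul', coeff_X_pow_mul',
    PowerSeries.coeff_X_pow]
  by_cases hd : a ∣ d
  · obtain ⟨t, rfl⟩ := hd
    have hdiv : ∀ u : ℕ, (a * u) / a = u := fun u => Nat.mul_div_cancel_left u ha
    match t with
    | 0 =>
      simp [G, ha.ne', Nat.le_zero, ha.ne]
    | 1 =>
      have h1 : a * 1 - a = 0 := by omega
      have h2 : ¬ (a + a ≤ a * 1) := by omega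
      simp [G, h1, h2, hdiv, ha.ne', Nat.div_self ha]
    | (t + 2) =>
      have h1 : a ≤ a * (t + 2) := by nlinarith
      have h2 : a + a ≤ a * (t + 2) := by nlinarith
      have e1 : a * (t + 2) - a = a * (t + 1) := by
        have : a * (t + 2) = a * (t + 1) + a := by ring
        omega
      have e2 : a * (t + 2) - (a + a) = a * t := by
        have : a * (t + 2) = a * t + (a + a) := by ring
        omega
      have e3 : ¬ (a * (t + 2) = a) := by nlinarith
      simp only [G, coeff_mk, if_pos h1, if_pos h2, e1, e2, if_neg e3,
        Nat.dvd_mul_right, if_pos, hdiv]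
      push_cast
      ring
  · have hg : ∀ u : ℕ, ¬ a ∣ u → (PowerSeries.coeff (R := Rxy) u) (G a) = 0 := by
      intro u hu
      simp [G, hu]
    have hd1 : (PowerSeries.coeff (R := Rxy) d) (G a) = 0 := hg d hd
    have hne : ¬ d = a := fun h => hd (h ▸ dvd_refl a)
    have k1 : (PowerSeries.coeff (R := Rxy) (d - a)) (G a) = 0 := by
      rcases le_or_gt a d with h1 | h1
      · exact hg _ fun hdvd => hd (by
          have h2 := Nat.dvd_add hdvd (dvd_refl a)
          rwa [Nat.sub_add_cancel h1] at h2)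
      · have he : d - a = 0 := by omega
        simp [G, he]
    have k2 : (PowerSeries.coeff (R := Rxy) (d - (a + a))) (G a) = 0 := by
      rcases le_or_gt (a + a) d with h1 | h1
      · exact hg _ fun hdvd => hd (by
          have h2 := Nat.dvd_add hdvd ((dvd_refl a).add (dvd_refl a))
          rwa [Nat.sub_add_cancel h1] at h2)
      · have he : d - (a + a) = 0 := by omega
        simp [G, he]
    rw [hd1, if_neg hne]
    split_ifs <;> simp [k1, k2]

lemma X_pow_mul_inverse {a : ℕ} (ha : 0 < a) :
    (X : PowerSeries Rxy) ^ a * Ring.inverse ((1 - X ^ a : PowerSeries Rxy) ^ 2) = G a := by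
  have hu := isUnit_one_sub_pow ha 2
  calc (X : PowerSeries Rxy) ^ a * Ring.inverse ((1 - X ^ a : PowerSeries Rxy) ^ 2)
      = ((1 - X ^ a : PowerSeries Rxy) ^ 2 * G a) * Ring.inverse ((1 - X ^ a) ^ 2) := by
        rw [one_sub_sq_mul_G ha]
    _ = G a * ((1 - X ^ a : PowerSeries Rxy) ^ 2 * Ring.inverse ((1 - X ^ a) ^ 2)) := by ring
    _ = G a := by rw [Ring.mul_inverse_cancel _ hu, mul_one]

lemma X_pow_mul_inverse4 {a : ℕ} (ha : 0 < a) :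
    (X : PowerSeries Rxy) ^ (2 * a) * Ring.inverse ((1 - X ^ a : PowerSeries Rxy) ^ 4) =
      G a ^ 2 := by
  have h4 : ((1 - X ^ a : PowerSeries Rxy) ^ 4) = ((1 - X ^ a) ^ 2) * ((1 - X ^ a) ^ 2) := by
    ring
  rw [h4, Ring.mul_inverse_rev, ← X_pow_mul_inverse ha]
  ring

end P2Aux

namespace P2Aux
open PowerSeries

lemma Wp_decomp (j k : ℕ) : Wp j k =
    (if j = 0 ∧ k = 0 then 1 else 0) + (if k = 0 then (j : Rxy) * xv else 0) +
      (if j = 0 then (k : Rxy) * xv else 0) + ((j : Rxy) * k) * (xv ^ 2 * yv ^ 2) := by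
  rcases Nat.eq_zero_or_pos j with rfl | hj
  · rcases Nat.eq_zero_or_pos k with rfl | hk
    · simp [Wp]
    · simp [Wp, hk.ne']
  · rcases Nat.eq_zero_or_pos k with rfl | hk
    · simp [Wp, hj.ne']
    · simp only [Wp, if_neg hj.ne', if_neg hk.ne', if_neg (by push_neg; exact ⟨hj.ne', hk.ne'⟩ :
        ¬(j = 0 ∨ k = 0)), if_neg (by simp [hj.ne', hk.ne'] : ¬(j = 0 ∧ k = 0))]
      ring

lemma sum_Wp_antidiagonal (t : ℕ) :
    ∑ p ∈ antidiagonal t, Wp p.1 p.2 =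
      (if t = 0 then 1 else 0) + 2 * ((t : Rxy) * xv) +
        (∑ p ∈ antidiagonal t, ((p.1 : Rxy) * p.2)) * (xv ^ 2 * yv ^ 2) := by
  have h1 : ∑ p ∈ antidiagonal t, (if p.1 = 0 ∧ p.2 = 0 then (1 : Rxy) else 0) =
      if t = 0 then 1 else 0 := by
    have : ∀ p : ℕ × ℕ, (if p.1 = 0 ∧ p.2 = 0 then (1 : Rxy) else 0) =
        if p = ((0, 0) : ℕ × ℕ) then 1 else 0 := by
      intro p; congr 1; simp [Prod.ext_iff]
    simp_rw [this]
    rw [Finset.sum_ite_eq' (antidiagonal t) ((0,0) : ℕ × ℕ) (fun _ => (1:Rxy))]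
    simp [Finset.HasAntidiagonal.mem_antidiagonal, eq_comm]
  have h2 : ∑ p ∈ antidiagonal t, (if p.2 = 0 then (p.1 : Rxy) * xv else 0) =
      (t : Rxy) * xv := by
    rw [Finset.sum_eq_single_of_mem ((t, 0) : ℕ × ℕ) (by simp)]
    · simp
    · intro b hb hbne
      rw [Finset.HasAntidiagonal.mem_antidiagonal] at hb
      rw [if_neg]
      intro hb2
      exact hbne (Prod.ext (by omega) hb2)
  have h3 : ∑ p ∈ antidiagonal t, (if p.1 = 0 then (p.2 : Rxy) * xv else 0) =
      (t : Rxy) * xv := by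
    rw [Finset.sum_eq_single_of_mem ((0, t) : ℕ × ℕ) (by simp)]
    · simp
    · intro b hb hbne
      rw [Finset.HasAntidiagonal.mem_antidiagonal] at hb
      rw [if_neg]
      intro hb1
      exact hbne (Prod.ext hb1 (by omega))
  calc ∑ p ∈ antidiagonal t, Wp p.1 p.2
      = ∑ p ∈ antidiagonal t, ((if p.1 = 0 ∧ p.2 = 0 then (1:Rxy) else 0) +
          (if p.2 = 0 then (p.1 : Rxy) * xv else 0) + (if p.1 = 0 then (p.2 : Rxy) * xv else 0) +
          ((p.1 : Rxy) * p.2) * (xv ^ 2 * yv ^ 2)) := by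
        refine Finset.sum_congr rfl fun p _ => ?_
        exact Wp_decomp p.1 p.2
    _ = _ := by
        rw [Finset.sum_add_distrib, Finset.sum_add_distrib, Finset.sum_add_distrib,
          h1, h2, h3, ← Finset.sum_mul]
        ring

lemma coeff_G_sq {a : ℕ} (ha : 0 < a) (d : ℕ) :
    PowerSeries.coeff (R := Rxy) d (G a * G a) =
      if a ∣ d then ∑ p ∈ antidiagonal (d / a), ((p.1 : Rxy) * p.2) else 0 := by
  have hdiv : ∀ u : ℕ, (a * u) / a = u := fun u => Nat.mul_div_cancel_left u ha
  rw [PowerSeries.coeff_mul]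
  by_cases hd : a ∣ d
  · rw [if_pos hd]
    rw [← Finset.sum_filter_add_sum_filter_not (antidiagonal d) (fun p => a ∣ p.1)]
    have hz : ∑ p ∈ (antidiagonal d).filter (fun p => ¬ a ∣ p.1),
        PowerSeries.coeff (R := Rxy) p.1 (G a) * PowerSeries.coeff (R := Rxy) p.2 (G a) = 0 := by
      apply Finset.sum_eq_zero; intro p hp
      rw [Finset.mem_filter] at hp
      simp [G, hp.2]
    rw [hz, add_zero]
    refine (Finset.sum_nbij' (fun q : ℕ × ℕ => (a * q.1, a * q.2))
      (fun p : ℕ × ℕ => (p.1 / a, p.2 / a)) ?_ ?_ ?_ ?_ ?_).symm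
    · intro q hq
      rw [Finset.HasAntidiagonal.mem_antidiagonal] at hq
      rw [Finset.mem_filter, Finset.HasAntidiagonal.mem_antidiagonal]
      exact ⟨by rw [← Nat.mul_add, hq, Nat.mul_div_cancel' hd], Dvd.intro _ rfl⟩
    · intro p hp
      rw [Finset.mem_filter, Finset.HasAntidiagonal.mem_antidiagonal] at hp
      have h2 : a ∣ p.2 := (Nat.dvd_add_right hp.2).mp (hp.1 ▸ hd)
      rw [Finset.HasAntidiagonal.mem_antidiagonal]
      obtain ⟨u, hu⟩ := hp.2
      obtain ⟨v, hv⟩ := h2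
      show p.1 / a + p.2 / a = d / a
      rw [hu, hv, hdiv, hdiv, ← hdiv (u + v), Nat.mul_add, ← hu, ← hv, hp.1]
    · intro q _
      simp [hdiv]
    · intro p hp
      rw [Finset.mem_filter, Finset.HasAntidiagonal.mem_antidiagonal] at hp
      have h2 : a ∣ p.2 := (Nat.dvd_add_right hp.2).mp (hp.1 ▸ hd)
      exact Prod.ext (by simp [Nat.mul_div_cancel' hp.2]) (by simp [Nat.mul_div_cancel' h2])
    · intro q _
      simp [G, hdiv]
  · rw [if_neg hd]
    apply Finset.sum_eq_zero; intro p hp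
    rw [Finset.HasAntidiagonal.mem_antidiagonal] at hp
    by_cases h1 : a ∣ p.1
    · have h2 : ¬ a ∣ p.2 := fun h2 => hd (hp ▸ Nat.dvd_add h1 h2)
      simp [G, h2]
    · simp [G, h1]

lemma F_eq {a : ℕ} (ha : 0 < a) :
    F a = 1 + 2 * PowerSeries.C (R := Rxy) xv * G a +
      PowerSeries.C (R := Rxy) (xv ^ 2 * yv ^ 2) * G a ^ 2 := by
  refine PowerSeries.ext fun d => ?_
  have c2 : (2 * PowerSeries.C (R := Rxy) xv : PowerSeries Rxy) = PowerSeries.C (R := Rxy) (2 * xv) := by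
    rw [map_mul, map_ofNat]
  rw [map_add, map_add, c2, PowerSeries.coeff_C_mul, PowerSeries.coeff_C_mul, pow_two (G a),
    coeff_G_sq ha, PowerSeries.coeff_one]
  simp only [F, G, coeff_mk]
  by_cases hd : a ∣ d
  · rw [if_pos hd, if_pos hd, if_pos hd, sum_Wp_antidiagonal]
    have h0 : d / a = 0 ↔ d = 0 := by
      constructor
      · intro h; have h2 := Nat.div_mul_cancel hd; rw [h, zero_mul] at h2; omega
      · intro h; simp [h]
    rw [show (if d = 0 then (1:Rxy) else 0) = (if d / a = 0 then (1:Rxy) else 0) by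
      simp [h0]]
    ring
  · rw [if_neg hd, if_neg hd, if_neg hd]
    have hd0 : ¬ d = 0 := fun h => hd (h ▸ dvd_zero a)
    simp [hd0]

end P2Aux

namespace P2Aux
open Finset

def Q (s : Finset ℕ) (k : ℕ) : Finset (Nat.Partition k) :=
  Finset.univ.filter fun c => ∀ i ∈ c.parts, i ∈ s

lemma mem_Q {s : Finset ℕ} {k : ℕ} {μ : Nat.Partition k} :
    μ ∈ Q s k ↔ ∀ i ∈ μ.parts, i ∈ s := by simp [Q]

lemma parts_split (M : Multiset ℕ) (a : ℕ) :
    M.filter (· ≠ a) + Multiset.replicate (M.count a) a = M := by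
  rw [← Multiset.filter_eq' M a]
  have h := Multiset.filter_add_not (fun x => x ≠ a) M
  rw [Multiset.filter_congr (p := fun x => ¬ x ≠ a) (q := fun x => x = a) (fun x _ => by simp)] at h
  exact h

lemma sigma_part_ext {f : ℕ → ℕ} {x y : Σ j : ℕ, Nat.Partition (f j)}
    (h1 : x.1 = y.1) (h2 : x.2.parts = y.2.parts) : x = y := by
  obtain ⟨x1, x2⟩ := x; obtain ⟨y1, y2⟩ := y
  dsimp at h1
  cases h1
  dsimp at h2
  exact congrArg (Sigma.mk x1) (Nat.Partition.ext h2)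

lemma count_combine {M : Multiset ℕ} {a : ℕ} (h : a ∉ M) (j : ℕ) :
    (M + Multiset.replicate j a).count a = j := by
  rw [Multiset.count_add, Multiset.count_replicate, if_pos rfl,
    Multiset.count_eq_zero_of_notMem h, zero_add]

lemma filter_combine {M : Multiset ℕ} {a : ℕ} (h : a ∉ M) (j : ℕ) :
    (M + Multiset.replicate j a).filter (· ≠ a) = M := by
  have h1 : Multiset.filter (· ≠ a) M = M :=
    Multiset.filter_eq_self.mpr (fun i hi hia => h (by rwa [hia] at hi))
  have h2 : Multiset.filter (· ≠ a) (Multiset.replicate j a) = 0 :=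
    Multiset.filter_eq_nil.mpr (fun b hb hb2 => hb2 (Multiset.eq_of_mem_replicate hb))
  rw [Multiset.filter_add, h1, h2, add_zero]

lemma sum_Q_insert {s : Finset ℕ} {a : ℕ} (ha : 0 < a) (has : a ∉ s) (K : ℕ)
    (G : ℕ → Multiset ℕ → Rxy) :
    ∑ μ ∈ Q (insert a s) K, G (μ.parts.count a) (μ.parts.filter (· ≠ a)) =
      ∑ j ∈ Finset.range (K / a + 1), ∑ μ' ∈ Q s (K - a * j), G j μ'.parts := by
  rw [Finset.sum_sigma']
  have key : ∀ μ : Nat.Partition K, μ ∈ Q (insert a s) K →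
      (μ.parts.filter (· ≠ a)).sum = K - a * μ.parts.count a ∧
        a * μ.parts.count a ≤ K := by
    intro μ hμ
    have hsum : (μ.parts.filter (· ≠ a)).sum + μ.parts.count a * a = K := by
      have h := congrArg Multiset.sum (parts_split μ.parts a)
      rwa [Multiset.sum_add, Multiset.sum_replicate, smul_eq_mul, μ.parts_sum] at h
    have hc : a * μ.parts.count a = μ.parts.count a * a := mul_comm _ _
    omega
  have combine_parts : ∀ (x : Σ j : ℕ, Nat.Partition (K - a * j)),
      x ∈ (Finset.range (K / a + 1)).sigma (fun j => Q s (K - a * j)) →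
      (x.2.parts + Multiset.replicate x.1 a).sum = K := by
    intro x hx
    obtain ⟨hx1, _⟩ := Finset.mem_sigma.mp hx
    rw [Finset.mem_range, Nat.lt_succ_iff, Nat.le_div_iff_mul_le ha] at hx1
    rw [Multiset.sum_add, Multiset.sum_replicate, smul_eq_mul, x.2.parts_sum]
    have hc : a * x.1 = x.1 * a := mul_comm _ _
    omega
  refine (Finset.sum_bij'
    (fun (x : Σ j : ℕ, Nat.Partition (K - a * j)) hx =>
      (⟨x.2.parts + Multiset.replicate x.1 a,
        fun {i} hi => by
          rcases Multiset.mem_add.mp hi with h | h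
          · exact x.2.parts_pos h
          · rw [Multiset.eq_of_mem_replicate h]; exact ha,
        combine_parts x hx⟩ : Nat.Partition K))
    (fun (μ : Nat.Partition K) hμ =>
      ⟨μ.parts.count a, ⟨μ.parts.filter (· ≠ a),
        fun {i} hi => μ.parts_pos (Multiset.mem_filter.mp hi).1,
        (key μ hμ).1⟩⟩)
    ?_ ?_ ?_ ?_ ?_).symm
  · -- hi : combine ∈ Q (insert a s) K
    rintro ⟨j, μ'⟩ hx
    rw [mem_Q]
    intro i hi
    rcases Multiset.mem_add.mp hi with h | h
    · exact Finset.mem_insert_of_mem ((mem_Q.mp (Finset.mem_sigma.mp hx).2) i h)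
    · rw [Multiset.eq_of_mem_replicate h]
      exact Finset.mem_insert_self a s
  · -- hj : strip ∈ sigma set
    intro μ hμ
    rw [Finset.mem_sigma]
    constructor
    · rw [Finset.mem_range, Nat.lt_succ_iff, Nat.le_div_iff_mul_le ha, mul_comm]
      exact (key μ hμ).2
    · rw [mem_Q]
      intro i hi
      rcases Multiset.mem_filter.mp hi with ⟨h1, h2⟩
      rcases Finset.mem_insert.mp ((mem_Q.mp hμ) i h1) with h | h
      · exact absurd h h2
      · exact h
  · -- left_inv : strip (combine x) = x
    rintro ⟨j, μ'⟩ hx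
    have hnotmem : a ∉ μ'.parts :=
      fun h => has ((mem_Q.mp (Finset.mem_sigma.mp hx).2) a h)
    exact sigma_part_ext (count_combine hnotmem j) (filter_combine hnotmem j)
  · -- right_inv : combine (strip μ) = μ
    intro μ hμ
    exact Nat.Partition.ext (parts_split μ.parts a)
  · -- weights
    rintro ⟨j, μ'⟩ hx
    have hnotmem : a ∉ μ'.parts :=
      fun h => has ((mem_Q.mp (Finset.mem_sigma.mp hx).2) a h)
    show G j μ'.parts = G ((μ'.parts + Multiset.replicate j a).count a)
        ((μ'.parts + Multiset.replicate j a).filter (· ≠ a))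
    rw [count_combine hnotmem j, filter_combine hnotmem j]

end P2Aux

namespace P2Aux
open Finset

lemma sum_reindex {a : ℕ} (ha : 0 < a) (n : ℕ) (U T : ℕ → ℕ → Rxy) :
    ∑ p ∈ antidiagonal n,
        (if a ∣ p.1 then ∑ q ∈ antidiagonal (p.1 / a), U q.1 q.2 else 0) *
          (∑ c ∈ Finset.range (p.2 + 1), T c (p.2 - c)) =
      ∑ K ∈ Finset.range (n + 1), ∑ j ∈ Finset.range (K / a + 1),
        ∑ k ∈ Finset.range ((n - K) / a + 1), U j k * T (K - a * j) (n - K - a * k) := by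
  simp only [ite_mul, zero_mul]
  rw [← Finset.sum_filter]
  simp_rw [Finset.sum_mul_sum]
  conv_lhs => rw [Finset.sum_sigma', Finset.sum_sigma']
  conv_rhs => rw [Finset.sum_sigma', Finset.sum_sigma']
  refine Finset.sum_nbij'
    (fun y => ⟨⟨a * y.1.2.1 + y.2, y.1.2.1⟩, y.1.2.2⟩)
    (fun y => ⟨⟨(a * (y.1.2 + y.2), n - a * (y.1.2 + y.2)), (y.1.2, y.2)⟩,
      y.1.1 - a * y.1.2⟩) ?_ ?_ ?_ ?_ ?_
  · rintro ⟨⟨⟨p1, p2⟩, ⟨q1, q2⟩⟩, c⟩ hy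
    simp only [Finset.mem_sigma, Finset.mem_filter, Finset.HasAntidiagonal.mem_antidiagonal,
      Finset.mem_range, Nat.lt_succ_iff] at hy ⊢
    obtain ⟨⟨⟨hp, hdvd⟩, hq⟩, hc⟩ := hy
    have hP : a * q1 + a * q2 = p1 := by
      rw [← mul_add, hq, Nat.mul_div_cancel' hdvd]
    refine ⟨⟨by omega, ?_⟩, ?_⟩
    · rw [Nat.le_div_iff_mul_le ha, mul_comm]
      omega
    · rw [Nat.le_div_iff_mul_le ha, mul_comm]
      omega
  · rintro ⟨⟨K, j⟩, k⟩ hy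
    simp only [Finset.mem_sigma, Finset.mem_filter, Finset.HasAntidiagonal.mem_antidiagonal,
      Finset.mem_range, Nat.lt_succ_iff] at hy ⊢
    obtain ⟨⟨hK, hj⟩, hk⟩ := hy
    rw [Nat.le_div_iff_mul_le ha] at hj hk
    have hja : a * j ≤ K := by rw [mul_comm]; exact hj
    have hka : a * k ≤ n - K := by rw [mul_comm]; exact hk
    have hd : a * (j + k) = a * j + a * k := mul_add a j k
    refine ⟨⟨⟨by omega, dvd_mul_right a _⟩, (Nat.mul_div_cancel_left _ ha).symm⟩, by omega⟩
  · rintro ⟨⟨⟨p1, p2⟩, ⟨q1, q2⟩⟩, c⟩ hy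
    simp only [Finset.mem_sigma, Finset.mem_filter, Finset.HasAntidiagonal.mem_antidiagonal,
      Finset.mem_range, Nat.lt_succ_iff] at hy
    obtain ⟨⟨⟨hp, hdvd⟩, hq⟩, hc⟩ := hy
    have hP : a * q1 + a * q2 = p1 := by
      rw [← mul_add, hq, Nat.mul_div_cancel' hdvd]
    have hd : a * (q1 + q2) = a * q1 + a * q2 := mul_add a q1 q2
    simp only [Sigma.mk.inj_iff, heq_iff_eq, Prod.mk.injEq]
    and_intros <;> first | trivial | omega
  · rintro ⟨⟨K, j⟩, k⟩ hy
    simp only [Finset.mem_sigma, Finset.mem_filter, Finset.HasAntidiagonal.mem_antidiagonal,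
      Finset.mem_range, Nat.lt_succ_iff] at hy
    obtain ⟨⟨hK, hj⟩, hk⟩ := hy
    rw [Nat.le_div_iff_mul_le ha] at hj hk
    have hja : a * j ≤ K := by rw [mul_comm]; exact hj
    simp only [Sigma.mk.inj_iff, heq_iff_eq, Prod.mk.injEq]
    and_intros <;> first | trivial | omega
  · rintro ⟨⟨⟨p1, p2⟩, ⟨q1, q2⟩⟩, c⟩ hy
    simp only [Finset.mem_sigma, Finset.mem_filter, Finset.HasAntidiagonal.mem_antidiagonal,
      Finset.mem_range, Nat.lt_succ_iff] at hy
    obtain ⟨⟨⟨hp, hdvd⟩, hq⟩, hc⟩ := hy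
    have hP : a * q1 + a * q2 = p1 := by
      rw [← mul_add, hq, Nat.mul_div_cancel' hdvd]
    show U q1 q2 * T c (p2 - c) = U q1 q2 * T (a * q1 + c - a * q1) (n - (a * q1 + c) - a * q2)
    rw [show a * q1 + c - a * q1 = c by omega, show n - (a * q1 + c) - a * q2 = p2 - c by omega]

end P2Aux

namespace P2Aux
open Finset

lemma coeff_F (a d : ℕ) : PowerSeries.coeff (R := Rxy) d (F a) =
    if a ∣ d then ∑ q ∈ antidiagonal (d / a), Wp q.1 q.2 else 0 :=
  PowerSeries.coeff_mk _ _

lemma Q_empty_pos {k : ℕ} (hk : 0 < k) : Q (∅ : Finset ℕ) k = ∅ := by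
  rw [Finset.eq_empty_iff_forall_notMem]
  intro μ hμ
  have hne : μ.parts ≠ 0 := by
    intro h
    have h2 := μ.parts_sum
    rw [h] at h2
    simp at h2
    omega
  obtain ⟨i, hi⟩ := Multiset.exists_mem_of_ne_zero hne
  exact absurd ((mem_Q.mp hμ) i hi) (Finset.notMem_empty i)

lemma Q_empty_zero : Q (∅ : Finset ℕ) 0 = Finset.univ := by
  refine Finset.eq_univ_iff_forall.mpr fun μ => mem_Q.mpr fun i hi => ?_
  have h0 : i = 0 := by
    have h2 := μ.parts_sum
    exact Multiset.sum_eq_zero_iff.mp h2 i hi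
  exact absurd (μ.parts_pos hi) (by omega)

lemma inner_step {s' : Finset ℕ} {a : ℕ} (ha : 0 < a) (has : a ∉ s') (n K : ℕ) :
    ∑ μ ∈ Q (insert a s') K, ∑ ν ∈ Q (insert a s') (n - K),
        ∏ i ∈ insert a s', Wp (μ.parts.count i) (ν.parts.count i) =
      ∑ j ∈ Finset.range (K / a + 1), ∑ k ∈ Finset.range ((n - K) / a + 1),
        Wp j k * ∑ μ' ∈ Q s' (K - a * j), ∑ ν' ∈ Q s' (n - K - a * k),
          ∏ i ∈ s', Wp (μ'.parts.count i) (ν'.parts.count i) := by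
  have hsplit : ∀ (km kn : ℕ) (μ : Nat.Partition km) (ν : Nat.Partition kn),
      ∏ i ∈ insert a s', Wp (μ.parts.count i) (ν.parts.count i) =
        Wp (μ.parts.count a) (ν.parts.count a) *
          ∏ i ∈ s', Wp ((μ.parts.filter (· ≠ a)).count i)
            ((ν.parts.filter (· ≠ a)).count i) := by
    intro km kn μ ν
    rw [Finset.prod_insert has]
    congr 1
    refine Finset.prod_congr rfl fun i hi => ?_
    have hia : i ≠ a := fun h => has (h ▸ hi)
    rw [Multiset.count_filter, if_pos hia, Multiset.count_filter, if_pos hia]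
  calc ∑ μ ∈ Q (insert a s') K, ∑ ν ∈ Q (insert a s') (n - K),
        ∏ i ∈ insert a s', Wp (μ.parts.count i) (ν.parts.count i)
      = ∑ μ ∈ Q (insert a s') K,
          ∑ k ∈ Finset.range ((n - K) / a + 1), ∑ ν' ∈ Q s' (n - K - a * k),
            Wp (μ.parts.count a) k *
              ∏ i ∈ s', Wp ((μ.parts.filter (· ≠ a)).count i) (ν'.parts.count i) := by
        refine Finset.sum_congr rfl fun μ _ => ?_
        rw [← sum_Q_insert ha has (n - K)
          (fun c M => Wp (μ.parts.count a) c *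
            ∏ i ∈ s', Wp ((μ.parts.filter (· ≠ a)).count i) (M.count i))]
        exact Finset.sum_congr rfl fun ν _ => hsplit _ _ μ ν
    _ = ∑ j ∈ Finset.range (K / a + 1), ∑ μ' ∈ Q s' (K - a * j),
          ∑ k ∈ Finset.range ((n - K) / a + 1), ∑ ν' ∈ Q s' (n - K - a * k),
            Wp j k * ∏ i ∈ s', Wp (μ'.parts.count i) (ν'.parts.count i) :=
        sum_Q_insert ha has K
          (fun j M => ∑ k ∈ Finset.range ((n - K) / a + 1), ∑ ν' ∈ Q s' (n - K - a * k),
            Wp j k * ∏ i ∈ s', Wp (M.count i) (ν'.parts.count i))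
    _ = _ := by
        refine Finset.sum_congr rfl fun j _ => ?_
        conv_lhs => rw [Finset.sum_comm]
        refine Finset.sum_congr rfl fun k _ => ?_
        conv_rhs => rw [Finset.mul_sum]
        refine Finset.sum_congr rfl fun μ' _ => ?_
        exact (Finset.mul_sum _ _ _).symm

set_option maxHeartbeats 1000000 in
lemma key2 (s : Finset ℕ) : 0 ∉ s → ∀ n : ℕ,
    PowerSeries.coeff (R := Rxy) n (∏ i ∈ s, F i) =
      ∑ k ∈ Finset.range (n + 1), ∑ μ ∈ Q s k, ∑ ν ∈ Q s (n - k),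
        ∏ i ∈ s, Wp (μ.parts.count i) (ν.parts.count i) := by
  induction s using Finset.induction with
  | empty =>
    intro _ n
    rw [Finset.prod_empty, PowerSeries.coeff_one]
    rcases Nat.eq_zero_or_pos n with rfl | hn
    · rw [if_pos rfl]
      rw [show Finset.range (0 + 1) = {0} from rfl]
      rw [Finset.sum_singleton, Q_empty_zero]
      simp [Finset.univ_unique]
    · rw [if_neg hn.ne']
      refine (Finset.sum_eq_zero fun k hk => ?_).symm
      rcases Nat.eq_zero_or_pos k with rfl | hkpos
      · rw [Nat.sub_zero, Q_empty_pos hn]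
        simp
      · rw [Q_empty_pos hkpos]
        simp
  | @insert a s' has ih =>
    intro h0 n
    have ha : 0 < a := Nat.pos_of_ne_zero (fun h => h0 (h ▸ Finset.mem_insert_self a s'))
    have h0' : 0 ∉ s' := fun h => h0 (Finset.mem_insert_of_mem h)
    rw [Finset.prod_insert has, PowerSeries.coeff_mul]
    have step1 : ∑ p ∈ antidiagonal n,
        (PowerSeries.coeff (R := Rxy) p.1) (F a) * (PowerSeries.coeff (R := Rxy) p.2) (∏ i ∈ s', F i) =
        ∑ p ∈ antidiagonal n,
          (if a ∣ p.1 then ∑ q ∈ antidiagonal (p.1 / a), Wp q.1 q.2 else 0) *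
            (∑ c ∈ Finset.range (p.2 + 1), ∑ μ ∈ Q s' c, ∑ ν ∈ Q s' (p.2 - c),
              ∏ i ∈ s', Wp (μ.parts.count i) (ν.parts.count i)) :=
      Finset.sum_congr rfl fun p _ => by rw [coeff_F, ih h0']
    rw [step1, sum_reindex ha n Wp
      (fun A B => ∑ μ ∈ Q s' A, ∑ ν ∈ Q s' B,
        ∏ i ∈ s', Wp (μ.parts.count i) (ν.parts.count i))]
    exact Finset.sum_congr rfl fun K _ => (inner_step ha has n K).symm

end P2Aux

namespace P2Aux
open Finset

lemma factor2_eq (m : ℕ) : factor2 (m + 1) = F (2 * m + 1) := by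
  have ha : 0 < 2 * m + 1 := Nat.succ_pos _
  have he : 2 * (m + 1) - 1 = 2 * m + 1 := by omega
  rw [factor2, he, F_eq ha, mul_assoc (2 * PowerSeries.C (R := Rxy) xv),
    X_pow_mul_inverse ha, mul_assoc (PowerSeries.C (R := Rxy) (xv ^ 2 * yv ^ 2)),
    X_pow_mul_inverse4 ha]

lemma weight_eq (s : Finset ℕ) {k : ℕ} (μ : Nat.Partition k) {k' : ℕ} (ν : Nat.Partition k')
    (hμ : μ ∈ Q s k) (hν : ν ∈ Q s k') :
    ∏ i ∈ s, Wp (μ.parts.count i) (ν.parts.count i) =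
      (pdoWeight μ * pdoWeight ν : Rxy) * xv ^ (numDistinct μ + numDistinct ν) *
        yv ^ (2 * numCommon μ ν) := by
  have hsubμ : μ.parts.toFinset ⊆ s := fun i hi =>
    (mem_Q.mp hμ) i (Multiset.mem_toFinset.mp hi)
  have hsubν : ν.parts.toFinset ⊆ s := fun i hi =>
    (mem_Q.mp hν) i (Multiset.mem_toFinset.mp hi)
  have hsub2 : μ.parts.toFinset ∩ ν.parts.toFinset ⊆ s :=
    fun i hi => hsubμ (Finset.mem_of_mem_inter_left hi)
  have hA : ∏ i ∈ s, (if μ.parts.count i = 0 then (1 : Rxy) else (μ.parts.count i : Rxy) * xv) =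
      (pdoWeight μ : Rxy) * xv ^ numDistinct μ := by
    rw [← Finset.prod_subset hsubμ (fun i _ hi =>
      if_pos (Multiset.count_eq_zero.mpr (fun h => hi (Multiset.mem_toFinset.mpr h))))]
    rw [Finset.prod_congr rfl (fun i hi => if_neg
      (Multiset.count_ne_zero.mpr (Multiset.mem_toFinset.mp hi)))]
    rw [← Finset.prod_mul_pow_card]
    rw [pdoWeight, numDistinct]
    push_cast
    ring
  have hB : ∏ i ∈ s, (if ν.parts.count i = 0 then (1 : Rxy) else (ν.parts.count i : Rxy) * xv) =
      (pdoWeight ν : Rxy) * xv ^ numDistinct ν := by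
    rw [← Finset.prod_subset hsubν (fun i _ hi =>
      if_pos (Multiset.count_eq_zero.mpr (fun h => hi (Multiset.mem_toFinset.mpr h))))]
    rw [Finset.prod_congr rfl (fun i hi => if_neg
      (Multiset.count_ne_zero.mpr (Multiset.mem_toFinset.mp hi)))]
    rw [← Finset.prod_mul_pow_card]
    rw [pdoWeight, numDistinct]
    push_cast
    ring
  have hC : ∏ i ∈ s, (if μ.parts.count i = 0 ∨ ν.parts.count i = 0 then (1 : Rxy) else yv ^ 2) =
      yv ^ (2 * numCommon μ ν) := by
    rw [← Finset.prod_subset hsub2 (fun i _ hi => by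
      rw [Finset.mem_inter, Multiset.mem_toFinset, Multiset.mem_toFinset] at hi
      by_cases h1 : i ∈ μ.parts
      · exact if_pos (Or.inr (Multiset.count_eq_zero.mpr (fun h2 => hi ⟨h1, h2⟩)))
      · exact if_pos (Or.inl (Multiset.count_eq_zero.mpr h1)))]
    have hcongr : ∀ i ∈ μ.parts.toFinset ∩ ν.parts.toFinset,
        (if μ.parts.count i = 0 ∨ ν.parts.count i = 0 then (1:Rxy) else yv ^ 2) = yv ^ 2 := by
      intro i hi
      rw [Finset.mem_inter, Multiset.mem_toFinset, Multiset.mem_toFinset] at hi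
      rw [if_neg]
      rintro (h | h)
      · exact Multiset.count_ne_zero.mpr hi.1 h
      · exact Multiset.count_ne_zero.mpr hi.2 h
    rw [Finset.prod_congr rfl hcongr, Finset.prod_const, ← pow_mul]
    rfl
  calc ∏ i ∈ s, Wp (μ.parts.count i) (ν.parts.count i)
      = (∏ i ∈ s, (if μ.parts.count i = 0 then (1:Rxy) else (μ.parts.count i : Rxy) * xv)) *
        (∏ i ∈ s, (if ν.parts.count i = 0 then (1:Rxy) else (ν.parts.count i : Rxy) * xv)) *
        (∏ i ∈ s, (if μ.parts.count i = 0 ∨ ν.parts.count i = 0 then (1:Rxy) else yv ^ 2)) := by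
        rw [← Finset.prod_mul_distrib, ← Finset.prod_mul_distrib]
        rfl
    _ = _ := by
        rw [hA, hB, hC, pow_add]
        ring

lemma odds_eq_Q {n k : ℕ} (hk : k ≤ n) :
    Nat.Partition.odds k = Q ((Finset.range (n + 1)).image (fun m => 2 * m + 1)) k := by
  unfold Nat.Partition.odds Q
  refine Finset.filter_congr fun μ _ => ?_
  constructor
  · intro h i hi
    have hodd : i % 2 = 1 := Nat.not_even_iff.mp (h i hi)
    have hle : i ≤ k := (Multiset.le_sum_of_mem hi).trans_eq μ.parts_sum
    rw [Finset.mem_image]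
    exact ⟨i / 2, Finset.mem_range.mpr (by omega), by omega⟩
  · intro h i hi
    obtain ⟨m, _, hm⟩ := Finset.mem_image.mp (h i hi)
    rw [Nat.even_iff]
    omega

end P2Aux

/-- In `ℤ[x,y][[q]]`:
`∑_{(μ,ν)} m(μ) m(ν) x^{ℓ_d(μ)+ℓ_d(ν)} y^{2ℓ_r(μ,ν)} q^{|μ|+|ν|}
  = ∏_{m≥1} (1 + 2x q^{2m-1}/(1-q^{2m-1})² + x²y² q^{2(2m-1)}/(1-q^{2m-1})⁴)`. -/
theorem P2_eq_prod : P2 = prod2 := by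
  refine PowerSeries.ext fun n => ?_
  rw [P2, prod2, PowerSeries.coeff_mk, PowerSeries.coeff_mk]
  have h0 : (0 : ℕ) ∉ (Finset.range (n + 1)).image (fun m => 2 * m + 1) := by
    rw [Finset.mem_image]
    rintro ⟨m, -, hm⟩
    omega
  have hprod : ∏ m ∈ Finset.range (n + 1), factor2 (m + 1) =
      ∏ i ∈ (Finset.range (n + 1)).image (fun m => 2 * m + 1), P2Aux.F i := by
    rw [Finset.prod_image (fun x _ y _ h => by omega)]
    exact Finset.prod_congr rfl fun m _ => P2Aux.factor2_eq m
  rw [hprod, P2Aux.key2 _ h0 n]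
  refine Finset.sum_congr rfl fun k hk => ?_
  rw [Finset.mem_range, Nat.lt_succ_iff] at hk
  rw [P2Aux.odds_eq_Q hk, P2Aux.odds_eq_Q (Nat.sub_le n k)]
  refine Finset.sum_congr rfl fun μ hμ => Finset.sum_congr rfl fun ν hν => ?_
  exact (P2Aux.weight_eq _ μ ν hμ hν).symm
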